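/- Let V be an r-dimensional L-vector space and let U be an h-scattered K-subspace of V, where 0 < h ≤ r−1. Then either dim_K U = r and U is (r−1)-scattered, or (h+1)·dim_K U ≤ r·n. -/

import Mathlib

open Module Submodule

def IsHScattered (K L V : Type*) [Field K] [Field L] [Algebra K L]
    [AddCommGroup V] [Module L V] [Module K V] [IsScalarTower K L V]
    (h : ℕ) (U : Submodule K V) : Prop :=
  Submodule.span L (U : Set V) = ⊤ ∧
  ∀ S : Submodule L V, Module.finrank L S = h →
    Module.finrank K ↥(U ⊓ S.restrictScalars K) ≤ h

section aux

variable {K L V : Type*} [Field K] [Field L] [Algebra K L]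
    [AddCommGroup V] [Module L V] [Module K V] [IsScalarTower K L V]

-- membership of v j in the span of the other vectors, from a dependence relation
lemma mem_span_erase {R W : Type*} [Field R] [AddCommGroup W] [Module R W]
    {ι : Type*} [DecidableEq ι] {T : Finset ι}
    {c : ι → R} {v : ι → W} {j : ι} (hj : j ∈ T) (hcj : c j ≠ 0)
    (hrel : ∑ i ∈ T, c i • v i = 0) :
    v j ∈ span R (v '' ↑(T.erase j)) := by
  have h1 : c j • v j = -∑ i ∈ T.erase j, c i • v i := by
    rw [eq_neg_iff_add_eq_zero, add_comm, Finset.sum_erase_add _ _ hj, hrel]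
  have h2 : v j = (c j)⁻¹ • -∑ i ∈ T.erase j, c i • v i := by
    rw [← h1, inv_smul_smul₀ hcj]
  rw [h2]
  exact Submodule.smul_mem _ _ (Submodule.neg_mem _ (Submodule.sum_mem _ fun i hi =>
    Submodule.smul_mem _ _ (Submodule.subset_span ⟨i, Finset.mem_coe.2 hi, rfl⟩)))

lemma span_image_erase {R W : Type*} [Field R] [AddCommGroup W] [Module R W]
    {ι : Type*} [DecidableEq ι] {T : Finset ι} {v : ι → W} {j : ι} (hj : j ∈ T)
    (hmem : v j ∈ span R (v '' ↑(T.erase j))) :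
    span R (v '' ↑T) = span R (v '' ↑(T.erase j)) := by
  conv_lhs => rw [← Finset.insert_erase hj]
  rw [Finset.coe_insert, Set.image_insert_eq, span_insert_eq_span hmem]

end aux

section key

variable {K L V : Type*} [Field K] [Field L] [Algebra K L]
    [AddCommGroup V] [Module L V] [Module K V] [IsScalarTower K L V]

lemma key_lt {ι : Type*} [DecidableEq ι] (N : ℕ) :
    ∀ (T : Finset ι), T.card ≤ N → ∀ (μ : ι → L) (v : ι → V),
      (∀ c : ι → K, (∑ i ∈ T, algebraMap K L (c i) * μ i) = 0 → ∀ i ∈ T, c i = 0) →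
      (∑ i ∈ T, μ i • v i) = 0 →
      (∃ i ∈ T, v i ≠ 0) →
      finrank L (span L (v '' ↑T)) < finrank K (span K (v '' ↑T)) := by
  induction N with
  | zero =>
    intro T hT μ v hμ hrel hv
    obtain ⟨i, hiT, _⟩ := hv
    rw [Nat.le_zero, Finset.card_eq_zero] at hT
    subst hT
    exact absurd hiT (by simp)
  | succ N ih =>
    intro T hTcard μ v hμ hrel hv
    classical
    -- all coefficients are nonzero
    have hμne : ∀ i ∈ T, μ i ≠ 0 := by
      intro i hiT hμi
      have h1 := hμ (fun i' => if i' = i then 1 else 0) ?_ i hiT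
      · simp at h1
      · rw [Finset.sum_eq_single_of_mem i hiT]
        · simp [hμi]
        · intro b _ hb; simp [hb]
    by_cases hdep : ∃ c : ι → K, (∑ i ∈ T, c i • v i) = 0 ∧ ∃ j ∈ T, c j ≠ 0
    · -- dependent case: remove index j, recurse
      obtain ⟨c, hc, j, hjT, hcj⟩ := hdep
      set T' := T.erase j with hT'
      have hvjK : v j ∈ span K (v '' ↑T') := mem_span_erase hjT hcj hc
      have hvjL : v j ∈ span L (v '' ↑T') := mem_span_erase hjT (hμne j hjT) hrel
      have hB : ∑ i ∈ T', μ i • v i = -(μ j • v j) := by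
        rw [eq_neg_iff_add_eq_zero, Finset.sum_erase_add _ _ hjT, hrel]
      have hA : ∑ i ∈ T', c i • v i = -(c j • v j) := by
        rw [eq_neg_iff_add_eq_zero, Finset.sum_erase_add _ _ hjT, hc]
      set μ' : ι → L := fun i => μ i - algebraMap K L ((c j)⁻¹ * c i) * μ j with hμ'def
      have hrel' : ∑ i ∈ T', μ' i • v i = 0 := by
        have hterm : ∀ i, (algebraMap K L ((c j)⁻¹ * c i) * μ j) • v i
            = μ j • (((c j)⁻¹ * c i) • v i) := by
          intro i
          rw [mul_comm, mul_smul, algebraMap_smul]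
        calc ∑ i ∈ T', μ' i • v i
            = ∑ i ∈ T', (μ i • v i - (algebraMap K L ((c j)⁻¹ * c i) * μ j) • v i) := by
              apply Finset.sum_congr rfl; intro i _; rw [hμ'def, sub_smul]
          _ = (∑ i ∈ T', μ i • v i) - ∑ i ∈ T', (algebraMap K L ((c j)⁻¹ * c i) * μ j) • v i := by
              rw [Finset.sum_sub_distrib]
          _ = -(μ j • v j) - μ j • ((c j)⁻¹ • ∑ i ∈ T', c i • v i) := by
              rw [hB]
              congr 1
              rw [Finset.smul_sum, Finset.smul_sum]
              apply Finset.sum_congr rfl; intro i _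
              rw [hterm, mul_smul]
          _ = 0 := by
              rw [hA, smul_neg, smul_neg, ← mul_smul, inv_mul_cancel₀ hcj, one_smul, sub_neg_eq_add,
                neg_add_cancel]
      have hμ'ind : ∀ c' : ι → K, (∑ i ∈ T', algebraMap K L (c' i) * μ' i) = 0 →
          ∀ i ∈ T', c' i = 0 := by
        intro c' hsum i hiT'
        set c'' : ι → K :=
          fun i' => if i' = j then -(∑ i'' ∈ T', c' i'' * ((c j)⁻¹ * c i'')) else c' i' with hc''
        have hsum2 : ∑ i' ∈ T, algebraMap K L (c'' i') * μ i' = 0 := by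
          rw [← Finset.sum_erase_add _ _ hjT]
          have he : ∀ i' ∈ T.erase j, algebraMap K L (c'' i') * μ i'
              = algebraMap K L (c' i') * μ i' := by
            intro i' hi'
            rw [hc'']
            simp only [if_neg (Finset.ne_of_mem_erase hi')]
          rw [Finset.sum_congr rfl he]
          have hexp : ∑ i' ∈ T', algebraMap K L (c' i') * μ i'
              = algebraMap K L (∑ i'' ∈ T', c' i'' * ((c j)⁻¹ * c i'')) * μ j := by
            have := hsum
            rw [hμ'def] at this
            simp only [mul_sub] at this
            rw [Finset.sum_sub_distrib, sub_eq_zero] at this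
            rw [this, map_sum, Finset.sum_mul]
            apply Finset.sum_congr rfl; intro i'' _
            simp only [map_mul, map_inv₀]
            ring
          rw [hexp]
          have hj' : c'' j = -(∑ i'' ∈ T', c' i'' * ((c j)⁻¹ * c i'')) := by
            rw [hc'']; simp
          rw [hj', map_neg, neg_mul, add_neg_cancel]
        have hz := hμ c'' hsum2 i (Finset.mem_of_mem_erase hiT')
        simpa only [hc'', if_neg (Finset.ne_of_mem_erase hiT')] using hz
      have hv' : ∃ i ∈ T', v i ≠ 0 := by
        by_contra hcon
        push_neg at hcon
        have hzero : ∑ i ∈ T', μ i • v i = 0 := by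
          apply Finset.sum_eq_zero; intro i hi; rw [hcon i hi, smul_zero]
        rw [hzero] at hB
        have hvj : v j = 0 := by
          have := hB.symm
          rw [neg_eq_zero, smul_eq_zero] at this
          tauto
        obtain ⟨i, hiT, hvi⟩ := hv
        rcases eq_or_ne i j with rfl | hne
        · exact hvi hvj
        · exact hvi (hcon i (Finset.mem_erase.2 ⟨hne, hiT⟩))
      have hcard' : T'.card ≤ N := by
        rw [hT', Finset.card_erase_of_mem hjT]
        omega
      have hlt := ih T' hcard' μ' v hμ'ind hrel' hv'
      rwa [span_image_erase hjT hvjL, span_image_erase hjT hvjK]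
    · -- independent case
      push_neg at hdep
      obtain ⟨j₀, hj₀T, hvj₀⟩ := hv
      have hli : LinearIndependent K (fun x : {x // x ∈ T} => v ↑x) := by
        rw [Fintype.linearIndependent_iff]
        intro g hg
        by_contra hgn
        push_neg at hgn
        obtain ⟨x₀, hx₀⟩ := hgn
        classical
        set c : ι → K := fun i => if h : i ∈ T then g ⟨i, h⟩ else 0 with hcdef
        have h1 : ∑ i ∈ T, c i • v i = 0 := by
          rw [← Finset.sum_coe_sort T (fun i => c i • v i), ← hg]
          apply Finset.sum_congr rfl
          intro x _
          rw [hcdef]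
          simp only [dif_pos x.2]
        have hzero := hdep c h1 x₀ x₀.2
        rw [hcdef] at hzero
        simp only [dif_pos x₀.2, Subtype.coe_eta] at hzero
        exact hx₀ hzero
      have hset : v '' ↑T = Set.range (fun x : {x // x ∈ T} => v ↑x) := by
        ext y; simp
      have hd : finrank K ↥(span K (v '' ↑T)) = T.card := by
        rw [hset, finrank_span_eq_card hli, Fintype.card_coe]
      have hvj₀span : v j₀ ∈ span L (v '' ↑(T.erase j₀)) :=
        mem_span_erase hj₀T (hμne j₀ hj₀T) hrel
      have hsle : finrank L ↥(span L (v '' ↑T)) ≤ (T.erase j₀).card := by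
        rw [span_image_erase hj₀T hvj₀span, ← Finset.coe_image]
        exact le_trans (finrank_span_finset_le_card _) Finset.card_image_le
      have hcard1 : 1 ≤ T.card := Finset.card_pos.2 ⟨j₀, hj₀T⟩
      rw [hd, Finset.card_erase_of_mem hj₀T] at *
      omega

end key

section main

variable {K L V : Type*} [Field K] [Field L] [Algebra K L]
    [AddCommGroup V] [Module L V] [Module K V] [IsScalarTower K L V]

lemma downward [FiniteDimensional K V] [FiniteDimensional L V]
    {h r : ℕ} (hr1 : h + 1 ≤ r) (hrV : finrank L V = r)
    {U : Submodule K V} (hU : IsHScattered K L V h U) :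
    ∀ (j s : ℕ), s + j = h → ∀ S : Submodule L V, finrank L S = s →
      finrank K ↥(U ⊓ S.restrictScalars K) ≤ s := by
  intro j
  induction j with
  | zero =>
    intro s hs S hS
    have hsh : s = h := by omega
    subst hsh
    exact hU.2 S hS
  | succ j ih =>
    intro s hs S hS
    have hnotsub : ¬ ((U : Set V) ⊆ (S : Set V)) := by
      intro hsub
      have h1 : (⊤ : Submodule L V) ≤ S := hU.1 ▸ span_le.2 hsub
      have h2 : S = ⊤ := top_le_iff.1 h1
      rw [h2, finrank_top, hrV] at hS
      omega
    obtain ⟨u, huU, huS⟩ := Set.not_subset.1 hnotsub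
    have hu0 : u ≠ 0 := fun h0 => huS (h0 ▸ S.zero_mem)
    have hinf : S ⊓ (L ∙ u) = ⊥ :=
      disjoint_iff.1 (disjoint_span_singleton.2 (fun hu => absurd hu huS))
    have hS' : finrank L ↥(S ⊔ (L ∙ u)) = s + 1 := by
      have := Submodule.finrank_sup_add_finrank_inf_eq S (L ∙ u)
      rw [hinf, finrank_bot, hS, finrank_span_singleton hu0] at this
      omega
    have ihS' := ih (s + 1) (by omega) (S ⊔ (L ∙ u)) hS'
    have hKu_le : (K ∙ u) ≤ U ⊓ (S ⊔ (L ∙ u)).restrictScalars K := by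
      rw [span_le, Set.singleton_subset_iff]
      exact ⟨huU, le_sup_right (α := Submodule L V)
        (Submodule.mem_span_singleton_self u)⟩
    have hle2 : (U ⊓ S.restrictScalars K) ⊔ (K ∙ u)
        ≤ U ⊓ (S ⊔ (L ∙ u)).restrictScalars K :=
      sup_le (inf_le_inf le_rfl ((Submodule.restrictScalarsEmbedding K L V).monotone le_sup_left)) hKu_le
    have hPinf : (U ⊓ S.restrictScalars K) ⊓ (K ∙ u) = ⊥ :=
      disjoint_iff.1 (disjoint_span_singleton.2
        (fun hu => absurd hu.2 huS))
    have hlow : finrank K ↥(U ⊓ S.restrictScalars K) + 1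
        = finrank K ↥((U ⊓ S.restrictScalars K) ⊔ (K ∙ u)) := by
      have := Submodule.finrank_sup_add_finrank_inf_eq (U ⊓ S.restrictScalars K) (K ∙ u)
      rw [hPinf, finrank_bot, finrank_span_singleton hu0] at this
      omega
    have := Submodule.finrank_mono hle2
    omega

end main

theorem stmt2 (n r h : ℕ) (K L V : Type*) [Field K] [Fintype K] [Field L] [Algebra K L]
    [AddCommGroup V] [Module L V] [Module K V] [IsScalarTower K L V]
    [FiniteDimensional K L] [FiniteDimensional L V]
    (hn : Module.finrank K L = n) (hr : Module.finrank L V = r)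
    (h0 : 0 < h) (hhr : h ≤ r - 1)
    (U : Submodule K V) (hU : IsHScattered K L V h U) :
    (Module.finrank K ↥U = r ∧ IsHScattered K L V (r - 1) U) ∨
      (h + 1) * Module.finrank K ↥U ≤ r * n := by
  classical
  haveI : FiniteDimensional K V := Module.Finite.trans L V
  have hr2 : h + 1 ≤ r := by
    rcases Nat.eq_zero_or_pos r with h1 | h1
    · omega
    · omega
  have hn1 : 1 ≤ n := by
    have := Module.finrank_pos (R := K) (M := L)
    omega
  have hVK : finrank K V = n * r := by rw [← Module.finrank_mul_finrank K L V, hn, hr]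
  -- r ≤ finrank K U
  have hrk : r ≤ finrank K U := by
    set b := Module.finBasis K ↥U with hb
    have hspanK : span K (Set.range fun i => ((b i : V))) = U := by
      have h1 : (Set.range fun i => ((b i : V))) = U.subtype '' Set.range b := by
        rw [← Set.range_comp]; rfl
      rw [h1, ← Submodule.map_span, b.span_eq, Submodule.map_top, Submodule.range_subtype]
    have h2 : span L (Set.range fun i => ((b i : V))) = ⊤ := by
      rw [← span_span_of_tower (R := K), hspanK, hU.1]
    have h3 := finrank_span_le_card (R := L) (Set.range fun i => ((b i : V)))
    have h4 : (Set.range fun i => ((b i : V))).toFinset.card ≤ finrank K ↥U := by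
      rw [Set.toFinset_range]
      exact le_trans Finset.card_image_le (by simp)
    rw [h2, finrank_top, hr] at h3
    omega
  rcases eq_or_lt_of_le hrk with heq | hlt
  · -- case finrank K U = r
    left
    refine ⟨heq.symm, hU.1, ?_⟩
    intro S hS
    by_contra hcon
    push_neg at hcon
    have hle : U ⊓ S.restrictScalars K ≤ U := inf_le_left
    have hler : finrank K ↥(U ⊓ S.restrictScalars K) ≤ finrank K ↥U :=
      Submodule.finrank_mono hle
    have hfr : finrank K ↥(U ⊓ S.restrictScalars K) = finrank K ↥U := by omega
    have hUeq : U ⊓ S.restrictScalars K = U := Submodule.eq_of_le_of_finrank_eq hle hfr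
    have hUsub : (U : Set V) ⊆ (S : Set V) := by
      intro x hx
      have hx2 : x ∈ U ⊓ S.restrictScalars K := by rw [hUeq]; exact hx
      exact hx2.2
    have h1 : (⊤ : Submodule L V) ≤ S := hU.1 ▸ span_le.2 hUsub
    rw [top_le_iff.1 h1, finrank_top, hr] at hS
    omega
  · -- case r < finrank K U
    right
    by_contra hcon
    push_neg at hcon
    haveI : Finite L := Module.finite_of_finite K
    obtain ⟨θ, hθ⟩ := Field.exists_primitive_element_of_finite_top K L
    have hdeg : (minpoly K θ).natDegree = n := by
      rw [(Field.primitive_element_iff_minpoly_natDegree_eq K θ).1 hθ, hn]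
    set m := min (h + 1) n with hm
    have hind : LinearIndependent K (fun i : Fin m => θ ^ (i : ℕ)) := by
      have h1 := linearIndependent_pow (K := K) θ
      rw [hdeg] at h1
      have h2 := h1.comp (Fin.castLE (min_le_right (h + 1) n)) (Fin.castLE_injective _)
      exact h2
    let φ : (Fin m → ↥U) →ₗ[K] V :=
      { toFun := fun u => ∑ i : Fin m, (θ ^ (i : ℕ)) • ((u i : V))
        map_add' := by
          intro x y
          rw [← Finset.sum_add_distrib]
          apply Finset.sum_congr rfl
          intro i _
          rw [Pi.add_apply, Submodule.coe_add, smul_add]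
        map_smul' := by
          intro c x
          simp only [Pi.smul_apply, Submodule.coe_smul, RingHom.id_apply, Finset.smul_sum]
          exact Finset.sum_congr rfl (fun i _ => smul_comm _ _ _) }
    have hdim : finrank K V < finrank K (Fin m → ↥U) := by
      rw [Module.finrank_pi_fintype, Finset.sum_const, smul_eq_mul, Finset.card_univ,
        Fintype.card_fin, hVK]
      rcases Nat.le_total (h + 1) n with hcase | hcase
      · have hmeq : m = h + 1 := by omega
        rw [hmeq]
        calc n * r = r * n := by ring
          _ < (h + 1) * finrank K ↥U := hcon
      · have hmeq : m = n := by omega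
        rw [hmeq]
        exact (Nat.mul_lt_mul_left (by omega)).mpr hlt
    have hninj : ¬ Function.Injective φ := by
      intro hinj
      have := LinearMap.finrank_le_finrank_of_injective hinj
      omega
    have hker : ∃ w : Fin m → ↥U, w ≠ 0 ∧ φ w = 0 := by
      by_contra hno
      push_neg at hno
      apply hninj
      rw [← LinearMap.ker_eq_bot, Submodule.eq_bot_iff]
      intro x hx
      by_contra hx0
      exact hno x hx0 hx
    obtain ⟨w, hw0, hφw⟩ := hker
    set v : Fin m → V := fun i => ((w i : V)) with hv
    have hμ : ∀ c : Fin m → K,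
        (∑ i ∈ (Finset.univ : Finset (Fin m)), algebraMap K L (c i) * θ ^ (i : ℕ)) = 0 →
        ∀ i ∈ (Finset.univ : Finset (Fin m)), c i = 0 := by
      intro c hc i _
      refine Fintype.linearIndependent_iff.1 hind c ?_ i
      rw [← hc]
      apply Finset.sum_congr rfl
      intro i' _
      rw [Algebra.smul_def]
    have hrelv : ∑ i ∈ (Finset.univ : Finset (Fin m)), (θ ^ (i : ℕ)) • v i = 0 := hφw
    have hvex : ∃ i ∈ (Finset.univ : Finset (Fin m)), v i ≠ 0 := by
      by_contra hno
      push_neg at hno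
      apply hw0
      funext i
      have h1 := hno i (Finset.mem_univ i)
      exact Subtype.ext (by simpa [hv] using h1)
    have hklt := key_lt (K := K) (L := L) m (Finset.univ : Finset (Fin m)) (by simp)
      (fun i => θ ^ (i : ℕ)) v hμ hrelv hvex
    set S₀ : Submodule L V := span L (v '' ↑(Finset.univ : Finset (Fin m))) with hS₀
    set s := finrank L ↥S₀ with hs
    have hdm : finrank K ↥(span K (v '' ↑(Finset.univ : Finset (Fin m)))) ≤ m := by
      rw [← Finset.coe_image]
      exact le_trans (finrank_span_finset_le_card _) (le_trans Finset.card_image_le (by simp))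
    have hsh : s ≤ h := by omega
    have hsub : span K (v '' ↑(Finset.univ : Finset (Fin m))) ≤ U ⊓ S₀.restrictScalars K := by
      rw [span_le]
      rintro x ⟨i, _, rfl⟩
      exact ⟨(w i).2, subset_span ⟨i, by simp, rfl⟩⟩
    have hmono := Submodule.finrank_mono hsub
    have hdown := downward hr2 hr hU (h - s) s (by omega) S₀ hs.symm
    omega
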